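/- In the pre-Bloch group P(C), for all a, b in C \ {0,1} with ab ≠ 1, one has [ab] = [a] + [b] + [(1-a)/(1-b^{-1})] + [(1-b)/(1-a^{-1})]. -/

import Mathlib

/-- The set of "admissible" generators: elements of `F \ {0,1}`. -/
abbrev PBG (F : Type*) [Field F] : Type _ := {z : F // z ≠ 0 ∧ z ≠ 1}

/-- The subgroup of five-term relations in the free abelian group on `F \ {0,1}`. -/
def fiveTermRels (F : Type*) [Field F] : AddSubgroup (FreeAbelianGroup (PBG F)) :=
  AddSubgroup.closure
    { r | ∃ x y a b c : PBG F, x ≠ y ∧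
        (a : F) = (y : F) / (x : F) ∧
        (b : F) = (1 - (x : F)⁻¹) / (1 - (y : F)⁻¹) ∧
        (c : F) = (1 - (x : F)) / (1 - (y : F)) ∧
        r = FreeAbelianGroup.of x - FreeAbelianGroup.of y + FreeAbelianGroup.of a
            - FreeAbelianGroup.of b + FreeAbelianGroup.of c }

/-- The pre-Bloch group `P(F)`. -/
abbrev preBloch (F : Type*) [Field F] :=
  FreeAbelianGroup (PBG F) ⧸ fiveTermRels F

/-- The class `[z]` of a generator in the pre-Bloch group. -/
def pb {F : Type*} [Field F] (z : PBG F) : preBloch F :=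
  QuotientAddGroup.mk (FreeAbelianGroup.of z)

/-- The five-term relation, as an identity in `P(F)`. -/
lemma pb_fiveTerm {F : Type*} [Field F] (x y a b c : PBG F) (hxy : x ≠ y)
    (ha : (a : F) = (y : F) / (x : F))
    (hb : (b : F) = (1 - (x : F)⁻¹) / (1 - (y : F)⁻¹))
    (hc : (c : F) = (1 - (x : F)) / (1 - (y : F))) :
    pb x - pb y + pb a - pb b + pb c = 0 := by
  have hmem : FreeAbelianGroup.of x - FreeAbelianGroup.of y + FreeAbelianGroup.of a
      - FreeAbelianGroup.of b + FreeAbelianGroup.of c ∈ fiveTermRels F :=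
    AddSubgroup.subset_closure ⟨x, y, a, b, c, hxy, ha, hb, hc, rfl⟩
  have := (QuotientAddGroup.eq_zero_iff _).mpr hmem
  simpa [pb, ← QuotientAddGroup.mk_add, ← QuotientAddGroup.mk_sub] using this

/-- The inversion relation `[z⁻¹] = -[z]` in `P(ℂ)`. -/
lemma pb_inv (z w : PBG ℂ) (h : (w : ℂ) = (z : ℂ)⁻¹) : pb w = - pb z := by
  obtain ⟨hz0, hz1⟩ := z.2
  obtain ⟨s, hs⟩ := IsAlgClosed.exists_pow_nat_eq (z : ℂ) (n := 2) (by norm_num)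
  have hs0 : s ≠ 0 := by rintro rfl; simp at hs; exact hz0 hs.symm
  have hs1 : s ≠ 1 := by rintro rfl; simp at hs; exact hz1 hs.symm
  have hsm1 : s ≠ -1 := by rintro rfl; norm_num at hs; exact hz1 hs.symm
  have hss : s ≠ s⁻¹ := by
    intro hcon
    apply hz1
    rw [← hs, pow_two]
    nth_rewrite 2 [hcon]
    exact mul_inv_cancel₀ hs0
  have hs1' : (1 : ℂ) - s ≠ 0 := by intro hcon; apply hs1; linear_combination -hcon
  have hsi0 : s⁻¹ ≠ 0 := inv_ne_zero hs0
  have hsi1 : s⁻¹ ≠ 1 := by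
    intro hcon; exact hs1 (by rw [← inv_inv s, hcon, inv_one])
  have hns0 : -s ≠ 0 := neg_ne_zero.mpr hs0
  have hns1 : -s ≠ 1 := by intro hcon; exact hsm1 (by linear_combination -hcon)
  have hnsi0 : -s⁻¹ ≠ 0 := neg_ne_zero.mpr hsi0
  have hnsi1 : -s⁻¹ ≠ 1 := by
    intro hcon
    apply hsm1
    rw [← inv_inv s]
    rw [show s⁻¹ = -1 by linear_combination -hcon]
    norm_num
  set S : PBG ℂ := ⟨s, hs0, hs1⟩
  set Si : PBG ℂ := ⟨s⁻¹, hsi0, hsi1⟩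
  set nS : PBG ℂ := ⟨-s, hns0, hns1⟩
  set nSi : PBG ℂ := ⟨-s⁻¹, hnsi0, hnsi1⟩
  have hSne : S ≠ Si := by
    intro hcon; exact hss (congrArg Subtype.val hcon)
  have hSne' : Si ≠ S := fun hcon => hSne hcon.symm
  have hw : (w : ℂ) = (Si : ℂ) / (S : ℂ) := by
    rw [h, ← hs]; field_simp
    show (1:ℂ) = s^2 * s⁻¹ * s⁻¹
    rw [pow_two, mul_inv_cancel_right₀ hs0, mul_inv_cancel₀ hs0]
  have hzv : (z : ℂ) = (S : ℂ) / (Si : ℂ) := by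
    rw [← hs]; field_simp
    show s^2 = s * (s⁻¹)⁻¹
    rw [inv_inv, pow_two]
  have h1 : pb S - pb Si + pb w - pb nSi + pb nS = 0 := by
    apply pb_fiveTerm S Si w nSi nS hSne hw
    · show (-s⁻¹ : ℂ) = (1 - s⁻¹) / (1 - (s⁻¹)⁻¹)
      rw [inv_inv]; field_simp; ring
    · show (-s : ℂ) = (1 - s) / (1 - s⁻¹)
      field_simp
      ring
  have h2 : pb Si - pb S + pb z - pb nS + pb nSi = 0 := by
    apply pb_fiveTerm Si S z nS nSi hSne' hzv
    · show (-s : ℂ) = (1 - (s⁻¹)⁻¹) / (1 - s⁻¹)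
      rw [inv_inv]; field_simp
      ring
    · show (-s⁻¹ : ℂ) = (1 - s⁻¹) / (1 - s)
      field_simp; ring
  have h3 : pb w + pb z = (pb S - pb Si + pb w - pb nSi + pb nS)
      + (pb Si - pb S + pb z - pb nS + pb nSi) := by abel
  rw [h1, h2, add_zero] at h3
  exact eq_neg_of_add_eq_zero_left h3

/-- In `P(ℂ)`, for `a, b ∈ ℂ \ {0,1}` with `ab ≠ 1`:
`[ab] = [a] + [b] + [(1-a)/(1-b⁻¹)] + [(1-b)/(1-a⁻¹)]`. -/
theorem preBloch_prod (a b ab p q : PBG ℂ)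
    (hab1 : (a : ℂ) * (b : ℂ) ≠ 1)
    (hab : (ab : ℂ) = (a : ℂ) * (b : ℂ))
    (hp : (p : ℂ) = (1 - (a : ℂ)) / (1 - (b : ℂ)⁻¹))
    (hq : (q : ℂ) = (1 - (b : ℂ)) / (1 - (a : ℂ)⁻¹)) :
    pb ab = pb a + pb b + pb p + pb q := by
  obtain ⟨ha0, ha1⟩ := a.2
  obtain ⟨hb0, hb1⟩ := b.2
  obtain ⟨hq0, hq1⟩ := q.2
  have hai0 : (a : ℂ)⁻¹ ≠ 0 := inv_ne_zero ha0
  have hai1 : (a : ℂ)⁻¹ ≠ 1 := by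
    intro hcon; exact ha1 (by rw [← inv_inv (a : ℂ), hcon, inv_one])
  have hqi0 : (q : ℂ)⁻¹ ≠ 0 := inv_ne_zero hq0
  have hqi1 : (q : ℂ)⁻¹ ≠ 1 := by
    intro hcon; exact hq1 (by rw [← inv_inv (q : ℂ), hcon, inv_one])
  set Ai : PBG ℂ := ⟨(a : ℂ)⁻¹, hai0, hai1⟩
  set Qi : PBG ℂ := ⟨(q : ℂ)⁻¹, hqi0, hqi1⟩
  have hne : Ai ≠ b := by
    intro hcon
    apply hab1
    have : (a : ℂ)⁻¹ = (b : ℂ) := congrArg Subtype.val hcon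
    rw [← this, mul_inv_cancel₀ ha0]
  have h1 : pb Ai - pb b + pb ab - pb p + pb Qi = 0 := by
    apply pb_fiveTerm Ai b ab p Qi hne
    · show (ab : ℂ) = (b : ℂ) / (a : ℂ)⁻¹
      rw [hab]; field_simp
    · show (p : ℂ) = (1 - ((a : ℂ)⁻¹)⁻¹) / (1 - (b : ℂ)⁻¹)
      rw [inv_inv]; exact hp
    · show ((q : ℂ)⁻¹) = (1 - (a : ℂ)⁻¹) / (1 - (b : ℂ))
      rw [hq, inv_div]
  have hA : pb Ai = - pb a := pb_inv a Ai rfl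
  have hQ : pb Qi = - pb q := pb_inv q Qi rfl
  rw [hA, hQ] at h1
  have : pb ab = (- pb a - pb b + pb ab - pb p + - pb q)
      + (pb a + pb b + pb p + pb q) := by abel
  rw [h1, zero_add] at this
  exact this
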